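/- For |q|<1, x ≠ 0, and c not equal to 1 or a negative integer power of q, ₀φ₁ satisfies ₀φ₁(−; cq²; q, xq²) = −[(1−c)(1−cq)/x] · ₀φ₁(−; cq; q, xq) + [(1−c)(1−cq)/x] · ₀φ₁(−; c; q, x). -/

import Mathlib

open scoped BigOperators

/-- q-shifted factorial (a;q)_j -/
noncomputable def qPoch (a q : ℂ) (j : ℕ) : ℂ :=
  ∏ i ∈ Finset.range j, (1 - a * q ^ i)

/-- infinite q-shifted factorial (a;q)_∞ -/
noncomputable def qPochInf (a q : ℂ) : ℂ :=
  ∏' j : ℕ, (1 - a * q ^ j)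

/-- basic hypergeometric series ₁φ₁(a; c; q, x) -/
noncomputable def phi11 (a c q x : ℂ) : ℂ :=
  ∑' j : ℕ, qPoch a q j / (qPoch q q j * qPoch c q j) *
    (-1) ^ j * q ^ (j * (j - 1) / 2) * x ^ j

/-- basic hypergeometric series ₀φ₁(–; c; q, x) -/
noncomputable def phi01 (c q x : ℂ) : ℂ :=
  ∑' j : ℕ, q ^ (j * (j - 1)) * x ^ j / (qPoch q q j * qPoch c q j)

/-- basic hypergeometric series ₂φ₁(a, b; c; q, x) -/
noncomputable def phi21 (a b c q x : ℂ) : ℂ :=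
  ∑' j : ℕ, qPoch a q j * qPoch b q j / (qPoch q q j * qPoch c q j) * x ^ j

lemma qPoch_zero (a q : ℂ) : qPoch a q 0 = 1 := by simp [qPoch]

lemma qPoch_succ (a q : ℂ) (j : ℕ) :
    qPoch a q (j+1) = qPoch a q j * (1 - a * q ^ j) :=
  Finset.prod_range_succ _ _

lemma qPoch_succ' (a q : ℂ) (j : ℕ) :
    qPoch a q (j+1) = (1 - a) * qPoch (a*q) q j := by
  unfold qPoch
  rw [Finset.prod_range_succ']
  simp only [pow_zero, mul_one, pow_succ', ← mul_assoc]
  rw [mul_comm]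

lemma qPoch_ne_zero (a q : ℂ) (h : ∀ i : ℕ, a * q ^ i ≠ 1) (j : ℕ) :
    qPoch a q j ≠ 0 := by
  unfold qPoch
  rw [Finset.prod_ne_zero_iff]
  intro i _
  exact sub_ne_zero_of_ne (fun hh => h i hh.symm)

lemma hq_pow_ne (q : ℂ) (hq : ‖q‖ < 1) : ∀ i : ℕ, q * q ^ i ≠ 1 := by
  intro i h
  have : ‖q * q ^ i‖ < 1 := by
    rw [norm_mul, norm_pow]
    calc ‖q‖ * ‖q‖ ^ i ≤ ‖q‖ * 1 := by
          exact mul_le_mul_of_nonneg_left (pow_le_one₀ (norm_nonneg q) hq.le) (norm_nonneg q)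
      _ < 1 := by simpa using hq
  rw [h] at this; simp at this

lemma pow_shift (q : ℂ) (j : ℕ) : q ^ ((j+1) * j) = q ^ (j*(j-1)) * q ^ (2*j) := by
  rw [← pow_add]
  congr 1
  cases j with
  | zero => simp
  | succ k => simp [Nat.succ_sub_one]; ring

lemma term_eq (q c x : ℂ) (hq : ‖q‖ < 1) (hc : ∀ n : ℕ, c * q ^ n ≠ 1) (j : ℕ) :
    q ^ ((j+1) * j) * x ^ (j+1) / (qPoch q q (j+1) * qPoch c q (j+1))
      - q ^ ((j+1) * j) * (x*q) ^ (j+1) / (qPoch q q (j+1) * qPoch (c*q) q (j+1))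
    = x / ((1-c)*(1-c*q)) *
        (q ^ (j*(j-1)) * (x*q^2) ^ j / (qPoch q q j * qPoch (c*q^2) q j)) := by
  have hc1 : ∀ n : ℕ, (c*q) * q ^ n ≠ 1 := fun n => by
    have := hc (n+1); rwa [pow_succ', ← mul_assoc] at this
  have hc2 : ∀ n : ℕ, (c*q^2) * q ^ n ≠ 1 := fun n => by
    have := hc (n+2); rwa [show q^(n+2) = q^2 * q^n by ring, ← mul_assoc] at this
  have hP : qPoch q q j ≠ 0 := qPoch_ne_zero _ _ (hq_pow_ne q hq) j
  have hW : qPoch (c*q) q j ≠ 0 := qPoch_ne_zero _ _ hc1 j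
  have hR : qPoch (c*q^2) q j ≠ 0 := qPoch_ne_zero _ _ hc2 j
  have h1c : (1:ℂ) - c ≠ 0 := sub_ne_zero_of_ne (fun h => hc 0 (by simpa using h.symm))
  have h1cq : (1:ℂ) - c*q ≠ 0 := sub_ne_zero_of_ne (fun h => hc 1 (by simpa using h.symm))
  have hqj : (1:ℂ) - q * q ^ j ≠ 0 := sub_ne_zero_of_ne (fun h => hq_pow_ne q hq j h.symm)
  have hcqj : (1:ℂ) - c*q * q ^ j ≠ 0 := sub_ne_zero_of_ne (fun h => hc1 j h.symm)
  have hrel : qPoch (c*q) q j * (1 - c*q * q ^ j) = (1 - c*q) * qPoch (c*q^2) q j := by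
    rw [← qPoch_succ, qPoch_succ', show c*q*q = c*q^2 by ring]
  have hRval : qPoch (c*q^2) q j = qPoch (c*q) q j * (1 - c*q*q^j) / (1 - c*q) := by
    rw [eq_div_iff h1cq]; linear_combination -hrel
  rw [pow_shift, qPoch_succ q q j, qPoch_succ' c q j, qPoch_succ' (c*q) q j,
    show c*q*q = c*q^2 by ring, hRval]
  have h1cq' : (1:ℂ) - q*c ≠ 0 := by rwa [mul_comm]
  have hcqj' : (1:ℂ) - q*q^j*c ≠ 0 := by convert hcqj using 2; ring
  field_simp
  ring

open Filter in
lemma summable_term (q c x : ℂ) (hq : ‖q‖ < 1) (hc : ∀ n : ℕ, c * q ^ n ≠ 1) :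
    Summable (fun j : ℕ => q ^ (j * (j-1)) * x ^ j / (qPoch q q j * qPoch c q j)) := by
  by_cases hqx : q = 0 ∨ x = 0
  · apply summable_of_ne_finset_zero (s := Finset.range 2)
    intro j hj
    simp only [Finset.mem_range, not_lt] at hj
    rcases hqx with h | h
    · have h2 : j * (j-1) ≠ 0 := Nat.mul_ne_zero (by omega) (by omega)
      simp [h, zero_pow h2]
    · simp [h, zero_pow (show j ≠ 0 by omega)]
  · push_neg at hqx
    obtain ⟨hq0, hx0⟩ := hqx
    set f : ℕ → ℂ := fun j => q ^ (j * (j-1)) * x ^ j / (qPoch q q j * qPoch c q j) with hf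
    have hP : ∀ j, qPoch q q j ≠ 0 := qPoch_ne_zero _ _ (hq_pow_ne q hq)
    have hC : ∀ j, qPoch c q j ≠ 0 := qPoch_ne_zero _ _ (fun i h => hc i h)
    have hne : ∀ j, f j ≠ 0 := by
      intro j
      simp only [hf]
      exact div_ne_zero (mul_ne_zero (pow_ne_zero _ hq0) (pow_ne_zero _ hx0))
        (mul_ne_zero (hP j) (hC j))
    set g : ℕ → ℂ := fun n => q ^ (2*n) * x / ((1 - q * q ^ n) * (1 - c * q ^ n)) with hg
    have hqj : ∀ n : ℕ, (1:ℂ) - q * q ^ n ≠ 0 :=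
      fun n => sub_ne_zero_of_ne (fun h => hq_pow_ne q hq n h.symm)
    have hcqj : ∀ n : ℕ, (1:ℂ) - c * q ^ n ≠ 0 :=
      fun n => sub_ne_zero_of_ne (fun h => hc n h.symm)
    have hfg : ∀ n, f (n+1) = f n * g n := by
      intro n
      simp only [hf, hg, Nat.add_sub_cancel, qPoch_succ, pow_shift]
      field_simp
      ring
    have hpow0 : Tendsto (fun n : ℕ => q ^ n) atTop (nhds 0) :=
      tendsto_pow_atTop_nhds_zero_of_norm_lt_one hq
    have hnum : Tendsto (fun n : ℕ => q ^ (2*n) * x) atTop (nhds 0) := by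
      have h2 : ‖q^2‖ < 1 := by
        rw [norm_pow]
        nlinarith [norm_nonneg q]
      simpa [pow_mul] using
        (tendsto_pow_atTop_nhds_zero_of_norm_lt_one h2).mul_const x
    have hden : Tendsto (fun n : ℕ => (1 - q * q ^ n) * (1 - c * q ^ n)) atTop (nhds 1) := by
      have h1 : Tendsto (fun n : ℕ => (1:ℂ) - q * q ^ n) atTop (nhds 1) := by
        simpa using tendsto_const_nhds.sub (hpow0.const_mul q)
      have h2 : Tendsto (fun n : ℕ => (1:ℂ) - c * q ^ n) atTop (nhds 1) := by
        simpa using tendsto_const_nhds.sub (hpow0.const_mul c)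
      simpa using h1.mul h2
    have hgt : Tendsto g atTop (nhds 0) := by
      simpa [hg, Pi.div_def] using hnum.div hden one_ne_zero
    apply summable_of_ratio_test_tendsto_lt_one one_pos (Eventually.of_forall hne)
    have : (fun n => ‖f (n+1)‖ / ‖f n‖) = fun n => ‖g n‖ := by
      funext n
      rw [hfg, norm_mul, mul_comm, mul_div_assoc,
        div_self (norm_ne_zero_iff.mpr (hne n)), mul_one]
    rw [this]
    simpa using hgt.norm


theorem phi01_three_term_recurrence_22 (q c x : ℂ) (hq : ‖q‖ < 1)
    (hc : ∀ n : ℕ, c * q ^ n ≠ 1) (hx : x ≠ 0) :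
    phi01 (c * q ^ 2) q (x * q ^ 2)
      = -((1 - c) * (1 - c * q) / x) * phi01 (c * q) q (x * q)
        + (1 - c) * (1 - c * q) / x * phi01 c q x := by
  have hc1 : ∀ n : ℕ, (c*q) * q ^ n ≠ 1 := fun n => by
    have := hc (n+1); rwa [pow_succ', ← mul_assoc] at this
  have hc2 : ∀ n : ℕ, (c*q^2) * q ^ n ≠ 1 := fun n => by
    have := hc (n+2); rwa [show q^(n+2) = q^2 * q^n by ring, ← mul_assoc] at this
  have hs0 := summable_term q c x hq hc
  have hs1 := summable_term q (c*q) (x*q) hq hc1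
  have hs2 := summable_term q (c*q^2) (x*q^2) hq hc2
  have h1c : (1:ℂ) - c ≠ 0 := sub_ne_zero_of_ne (fun h => hc 0 (by simpa using h.symm))
  have h1cq : (1:ℂ) - c*q ≠ 0 := sub_ne_zero_of_ne (fun h => hc 1 (by simpa using h.symm))
  have key : phi01 c q x - phi01 (c*q) q (x*q)
      = x / ((1-c)*(1-c*q)) * phi01 (c*q^2) q (x*q^2) := by
    unfold phi01
    rw [← Summable.tsum_sub hs0 hs1, Summable.tsum_eq_zero_add (hs0.sub hs1)]
    have h1 : ∀ j : ℕ,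
        (q ^ ((j+1)*((j+1)-1)) * x ^ (j+1) / (qPoch q q (j+1) * qPoch c q (j+1))
          - q ^ ((j+1)*((j+1)-1)) * (x*q) ^ (j+1) / (qPoch q q (j+1) * qPoch (c*q) q (j+1)))
        = x / ((1-c)*(1-c*q)) *
            (q ^ (j*(j-1)) * (x*q^2) ^ j / (qPoch q q j * qPoch (c*q^2) q j)) := by
      intro j
      simp only [Nat.add_sub_cancel]
      exact term_eq q c x hq hc j
    rw [tsum_congr h1, tsum_mul_left]
    simp [qPoch_zero]
  have hD : ((1:ℂ)-c)*(1-c*q) ≠ 0 := mul_ne_zero h1c h1cq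
  field_simp at key
  rw [mul_comm q x, mul_comm (q^2) x] at key
  rw [show phi01 (c*q^2) q (x*q^2) = x * phi01 (c*q^2) q (x*q^2) / x by
        rw [mul_div_cancel_left₀ _ hx], ← key]
  ring
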